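/- Let c > 0 and let α : ℝ → ℝ be continuous on [0, c], twice continuously differentiable on (0, c), satisfy α(0) = 0, and be strictly increasing on [0, c] (so α(y) > 0 for y ∈ (0, c]). Suppose there exists ε ∈ (0, c) such that ∫_ε^c (1/α(y)) dy < (c/α(c))·ln(c/ε) (i.e., the endpoint-relaxation ratio r_α(ε, c) < 1). Then there exist 0 < a < b < c such that α''(y) < 0 for all y ∈ (a, b); in particular, α is strictly concave on a nontrivial subinterval of (0, c). -/

import Mathlib

open intervalIntegral Real

/-- Crossing time of the comparison ODE on the window `[ε, c]`. -/
noncomputable def Tcross (α : ℝ → ℝ) (ε c : ℝ) : ℝ := ∫ y in ε..c, 1 / α y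

/-- Concavity is necessary for endpoint relaxation: if the endpoint-relaxation
ratio is `< 1` on some window, then `α'' < 0` on a nontrivial subinterval of
`(0, c)`; in particular `α` is strictly concave there. -/
theorem stmt_8 (α : ℝ → ℝ) (c : ℝ) (hc : 0 < c)
    (hcont : ContinuousOn α (Set.Icc 0 c))
    (hC2 : ContDiffOn ℝ 2 α (Set.Ioo 0 c))
    (h0 : α 0 = 0)
    (hmono : StrictMonoOn α (Set.Icc 0 c))
    (hrelax : ∃ ε ∈ Set.Ioo 0 c,
      Tcross α ε c < (c / α c) * Real.log (c / ε)) :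
    ∃ a b : ℝ, 0 < a ∧ a < b ∧ b < c ∧
      (∀ y ∈ Set.Ioo a b, deriv (deriv α) y < 0) ∧
      StrictConcaveOn ℝ (Set.Ioo a b) α := by
  obtain ⟨ε, hε, hT⟩ := hrelax
  have hαc : 0 < α c := by
    have := hmono (Set.left_mem_Icc.2 hc.le) (Set.right_mem_Icc.2 hc.le) hc
    rwa [h0] at this
  have hαpos : ∀ y ∈ Set.Icc ε c, 0 < α y := fun y hy => by
    have h0y : (0:ℝ) < y := lt_of_lt_of_le hε.1 hy.1
    have hym : y ∈ Set.Icc (0:ℝ) c := ⟨h0y.le, hy.2⟩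
    have := hmono (Set.left_mem_Icc.2 hc.le) hym h0y
    rwa [h0] at this
  have hopen : IsOpen (Set.Ioo (0:ℝ) c) := isOpen_Ioo
  have hα' : DifferentiableOn ℝ α (Set.Ioo 0 c) :=
    hC2.differentiableOn (by norm_num)
  have hα'' : ContDiffOn ℝ 1 (deriv α) (Set.Ioo 0 c) :=
    hC2.deriv_of_isOpen hopen (by norm_num)
  -- Key claim: the second derivative is negative somewhere.
  have key : ∃ y₀ ∈ Set.Ioo (0:ℝ) c, deriv (deriv α) y₀ < 0 := by
    by_contra hcon
    push_neg at hcon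
    have hconv : ConvexOn ℝ (Set.Icc 0 c) α := by
      apply convexOn_of_deriv2_nonneg (convex_Icc 0 c) hcont
      · rwa [interior_Icc]
      · rw [interior_Icc]; exact hα''.differentiableOn (by norm_num)
      · rw [interior_Icc]
        intro x hx
        simpa [Function.iterate_succ, Function.comp] using hcon x hx
    -- chord bound: α y ≤ (y / c) * α c on [0, c]
    have hchord : ∀ y ∈ Set.Icc (0:ℝ) c, α y ≤ y / c * α c := by
      intro y hy
      have ht0 : 0 ≤ y / c := div_nonneg hy.1 hc.le
      have ht1 : y / c ≤ 1 := (div_le_one hc).2 hy.2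
      have := hconv.2 (Set.left_mem_Icc.2 hc.le) (Set.right_mem_Icc.2 hc.le)
        (by linarith : (0:ℝ) ≤ 1 - y / c) ht0 (by ring)
      have hy' : (1 - y / c) • (0:ℝ) + (y / c) • c = y := by
        field_simp
        simp only [smul_eq_mul, mul_zero, zero_add]
        field_simp
      rw [hy'] at this
      simpa [h0] using this
    -- pointwise comparison of integrands
    have hpt : ∀ y ∈ Set.Icc ε c, c / α c * (1 / y) ≤ 1 / α y := by
      intro y hy
      have hy0 : (0:ℝ) < y := lt_of_lt_of_le hε.1 hy.1
      have hαy : 0 < α y := hαpos y hy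
      have hch := hchord y ⟨hy0.le, hy.2⟩
      have h1 : 1 / (y / c * α c) ≤ 1 / α y :=
        one_div_le_one_div_of_le hαy hch
      calc c / α c * (1 / y) = 1 / (y / c * α c) := by
            field_simp
        _ ≤ 1 / α y := h1
    have hεc : ε ≤ c := hε.2.le
    have hi1 : IntervalIntegrable (fun y => 1 / α y) MeasureTheory.volume ε c := by
      apply ContinuousOn.intervalIntegrable
      rw [Set.uIcc_of_le hεc]
      exact ContinuousOn.div continuousOn_const
        (hcont.mono (Set.Icc_subset_Icc hε.1.le le_rfl))
        (fun y hy => (hαpos y hy).ne')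
    have hi2 : IntervalIntegrable (fun y => c / α c * (1 / y)) MeasureTheory.volume ε c := by
      apply ContinuousOn.intervalIntegrable
      rw [Set.uIcc_of_le hεc]
      exact ContinuousOn.mul continuousOn_const
        (ContinuousOn.div continuousOn_const continuousOn_id
          (fun y hy => (lt_of_lt_of_le hε.1 hy.1).ne'))
    have hmono' : (∫ y in ε..c, c / α c * (1 / y)) ≤ ∫ y in ε..c, 1 / α y :=
      intervalIntegral.integral_mono_on hεc hi2 hi1 hpt
    have hlog : (∫ y in ε..c, c / α c * (1 / y)) = c / α c * Real.log (c / ε) := by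
      rw [intervalIntegral.integral_const_mul, integral_one_div]
      intro h
      rw [Set.uIcc_of_le hεc] at h
      exact absurd h.1 (not_le.2 hε.1)
    rw [hlog] at hmono'
    exact absurd hT (not_lt.2 (le_trans hmono' le_rfl))
  obtain ⟨y₀, hy₀, hneg⟩ := key
  -- continuity of the second derivative at y₀
  have hcd : ContinuousOn (deriv (deriv α)) (Set.Ioo 0 c) :=
    hα''.continuousOn_deriv_of_isOpen hopen le_rfl
  have hcat : ContinuousAt (deriv (deriv α)) y₀ :=
    hcd.continuousAt (hopen.mem_nhds hy₀)
  have hmemnh : (deriv (deriv α)) ⁻¹' Set.Iio 0 ∈ nhds y₀ :=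
    hcat.preimage_mem_nhds (Iio_mem_nhds hneg)
  obtain ⟨a₀, b₀, hy₀ab, hsub⟩ := mem_nhds_iff_exists_Ioo_subset.1 hmemnh
  refine ⟨max a₀ (y₀ / 2), min b₀ ((y₀ + c) / 2), ?_, ?_, ?_, ?_, ?_⟩
  · exact lt_max_of_lt_right (by linarith [hy₀.1])
  · apply max_lt_iff.2 ⟨lt_min_iff.2 ⟨hy₀ab.1.trans hy₀ab.2, by linarith [hy₀.2, hy₀ab.1]⟩, _⟩
    exact lt_min_iff.2 ⟨by linarith [hy₀ab.2, hy₀.1], by linarith [hy₀.1, hy₀.2]⟩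
  · exact lt_of_le_of_lt (min_le_right _ _) (by linarith [hy₀.2])
  · intro y hy
    apply hsub
    exact ⟨lt_of_le_of_lt (le_max_left _ _) hy.1, lt_of_lt_of_le hy.2 (min_le_left _ _)⟩
  · -- strict concavity from negative second derivative
    have hss : Set.Ioo (max a₀ (y₀ / 2)) (min b₀ ((y₀ + c) / 2)) ⊆ Set.Ioo 0 c := by
      intro y hy
      constructor
      · calc (0:ℝ) < y₀ / 2 := by linarith [hy₀.1]
          _ ≤ max a₀ (y₀ / 2) := le_max_right _ _
          _ < y := hy.1
      · calc y < min b₀ ((y₀ + c) / 2) := hy.2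
          _ ≤ (y₀ + c) / 2 := min_le_right _ _
          _ < c := by linarith [hy₀.2]
    apply strictConcaveOn_of_deriv2_neg (convex_Ioo _ _)
      ((hα'.continuousOn).mono hss)
    intro x hx
    rw [interior_Ioo] at hx
    have : deriv (deriv α) x < 0 := hsub
      ⟨lt_of_le_of_lt (le_max_left _ _) hx.1, lt_of_lt_of_le hx.2 (min_le_left _ _)⟩
    simpa [Function.iterate_succ, Function.comp] using this
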